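/- Let Γ be a countable discrete group with a measurable action on a measure space (X,ν), let Y ⊆ X be a domain, let Z ⊆ Y be a measurable subset, let ε > 0, and let S ⊆ Γ be a finite symmetric subset with 1 ∈ S. Consider the family F := { F ⊆ Y ∖ Z measurable : ν(F) ≤ ν(Y)/2 and ν((∂_S F ∩ Y) ∖ Z) ≤ ε·ν(F) } of (ε,S)-Følner sets in Y relative to Z. Then F contains a maximal element up to null sets: there exists F ∈ F such that every F' ∈ F with ν(F ∖ F') = 0 satisfies ν(F' ∖ F) = 0. -/

import Mathlib

open MeasureTheory Set Filter Pointwise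

/-- The union `S · A = ⋃ s ∈ S, s • A` of the translates of `A` by elements of the
finite set `S ⊆ Γ`. -/
def finSMul {Γ X : Type*} [Group Γ] [MulAction Γ X] (S : Finset Γ) (A : Set X) : Set X :=
  ⋃ s ∈ S, s • A

/-- `S` is a finite symmetric subset of `Γ` containing the identity. -/
def SymmFin {Γ : Type*} [Group Γ] (S : Finset Γ) : Prop :=
  (1 : Γ) ∈ S ∧ ∀ s ∈ S, s⁻¹ ∈ S

/-- The `S`-boundary `∂_S A = (S·A) \ A`. -/
def finBdry {Γ X : Type*} [Group Γ] [MulAction Γ X] (S : Finset Γ) (A : Set X) : Set X :=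
  finSMul S A \ A

/-- `Y` is a domain of `(c,S)`-expansion: `ν((S·A) ∩ Y) > (1+c)·ν(A)` for every
measurable `A ⊆ Y` with `0 < ν(A) ≤ ν(Y)/2`. -/
def ExpandsOn {Γ X : Type*} [Group Γ] [MulAction Γ X] [MeasurableSpace X]
    (ν : MeasureTheory.Measure X) (Y : Set X) (c : ℝ) (S : Finset Γ) : Prop :=
  ∀ A : Set X, MeasurableSet A → A ⊆ Y → 0 < ν A → ν A ≤ ν Y / 2 →
    (1 + ENNReal.ofReal c) * ν A < ν (finSMul S A ∩ Y)

/-- `Y` is a domain of expansion: `(c,S)`-expansion for some `c > 0` and some finite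
symmetric `S ∋ 1`. -/
def ExpDomain (Γ : Type*) {X : Type*} [Group Γ] [MulAction Γ X] [MeasurableSpace X]
    (ν : MeasureTheory.Measure X) (Y : Set X) : Prop :=
  ∃ c : ℝ, 0 < c ∧ ∃ S : Finset Γ, SymmFin S ∧ ExpandsOn ν Y c S

lemma exists_seq_rel' {α : Type*} (a0 : α) (R : ℕ → α → α → Prop)
    (h : ∀ n a, ∃ b, R n a b) :
    ∃ f : ℕ → α, f 0 = a0 ∧ ∀ n, R n (f n) (f (n + 1)) := by
  choose g hg using h
  exact ⟨fun n => Nat.rec a0 g n, rfl, fun n => hg n _⟩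

lemma finSMul_mono' {Γ X : Type*} [Group Γ] [MulAction Γ X] (S : Finset Γ) {A B : Set X}
    (h : A ⊆ B) : finSMul S A ⊆ finSMul S B :=
  Set.iUnion₂_mono fun s _ => Set.smul_set_mono h

lemma finSMul_iUnion' {Γ X : Type*} [Group Γ] [MulAction Γ X] (S : Finset Γ) (A : ℕ → Set X) :
    finSMul S (⋃ n, A n) = ⋃ n, finSMul S (A n) := by
  ext x
  simp only [finSMul, Set.mem_iUnion, Set.mem_smul_set_iff_inv_smul_mem]
  tauto

lemma measurableSet_finSMul' {Γ X : Type*} [Group Γ] [MulAction Γ X] [MeasurableSpace X]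
    (hmeas : ∀ γ : Γ, Measurable fun x : X => γ • x) (S : Finset Γ) {A : Set X}
    (hA : MeasurableSet A) : MeasurableSet (finSMul S A) := by
  refine MeasurableSet.biUnion S.countable_toSet fun s _ => ?_
  have h : s • A = (fun x : X => s⁻¹ • x) ⁻¹' A := by
    ext x; simp [Set.mem_smul_set_iff_inv_smul_mem]
  rw [h]
  exact (hmeas s⁻¹) hA
/-- The `(α,c,S)` asymptotic-expansion estimate on `Y`: `ν((S·A) ∩ Y) > (1+c)·ν(A)` for
every measurable `A ⊆ Y` with `α·ν(Y) ≤ ν(A) ≤ ν(Y)/2`. -/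
def AsymExpandsOn {Γ X : Type*} [Group Γ] [MulAction Γ X] [MeasurableSpace X]
    (ν : MeasureTheory.Measure X) (Y : Set X) (α c : ℝ) (S : Finset Γ) : Prop :=
  ∀ A : Set X, MeasurableSet A → A ⊆ Y → ENNReal.ofReal α * ν Y ≤ ν A → ν A ≤ ν Y / 2 →
    (1 + ENNReal.ofReal c) * ν A < ν (finSMul S A ∩ Y)

/-- `Y` is a domain of asymptotic expansion. -/
def AsymExpDomain (Γ : Type*) {X : Type*} [Group Γ] [MulAction Γ X] [MeasurableSpace X]
    (ν : MeasureTheory.Measure X) (Y : Set X) : Prop :=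
  ∀ α : ℝ, 0 < α → α ≤ 1 / 2 →
    ∃ c : ℝ, 0 < c ∧ ∃ S : Finset Γ, SymmFin S ∧ AsymExpandsOn ν Y α c S

/-- The action of `Γ` on the probability space `(X,ν)` is strongly ergodic: every almost
invariant sequence of measurable sets is asymptotically trivial. -/
def StronglyErgodic (Γ : Type*) {X : Type*} [Group Γ] [MulAction Γ X] [MeasurableSpace X]
    (ν : MeasureTheory.Measure X) : Prop :=
  ∀ C : ℕ → Set X, (∀ n, MeasurableSet (C n)) →
    (∀ γ : Γ, Filter.Tendsto (fun n => ν (symmDiff (C n) (γ • C n))) Filter.atTop (nhds 0)) →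
    Filter.Tendsto (fun n => ν (C n) * (1 - ν (C n))) Filter.atTop (nhds 0)

/-- The action of `Γ` on `(X,ν)` is measure-class-preserving. -/
def MeasClassPres (Γ : Type*) {X : Type*} [Group Γ] [MulAction Γ X] [MeasurableSpace X]
    (ν : MeasureTheory.Measure X) : Prop :=
  ∀ (γ : Γ) (A : Set X), MeasurableSet A → (ν (γ • A) = 0 ↔ ν A = 0)

/-- The action of `Γ` on `(X,ν)` is ergodic: every invariant measurable set is null or
conull. -/
def ErgodicAct (Γ : Type*) {X : Type*} [Group Γ] [MulAction Γ X] [MeasurableSpace X]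
    (ν : MeasureTheory.Measure X) : Prop :=
  ∀ A : Set X, MeasurableSet A → (∀ γ : Γ, γ • A = A) → ν A = 0 ∨ ν Aᶜ = 0

/-- `W` admits an exhaustion by measurable subsets satisfying `P`. -/
def ExhaustionBy {X : Type*} [MeasurableSpace X] (ν : MeasureTheory.Measure X)
    (W : Set X) (P : Set X → Prop) : Prop :=
  ∃ Y : ℕ → Set X, Monotone Y ∧ (∀ n, MeasurableSet (Y n)) ∧ (∀ n, Y n ⊆ W) ∧
    (∀ n, P (Y n)) ∧ ν (W \ ⋃ n, Y n) = 0

/-- Lemma 4.2: the family of `(ε,S)`-Følner sets in `Y` relative to `Z`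
contains a maximal element up to null sets. -/
theorem exists_maximal_foelner
    {Γ X : Type*} [Group Γ] [Countable Γ] [MulAction Γ X] [MeasurableSpace X]
    (ν : Measure X)
    (hmeas : ∀ γ : Γ, Measurable fun x : X => γ • x)
    (Y : Set X) (hYm : MeasurableSet Y) (hY0 : 0 < ν Y) (hYfin : ν Y < ⊤)
    (Z : Set X) (hZm : MeasurableSet Z) (hZsub : Z ⊆ Y)
    (ε : ℝ) (hε : 0 < ε) (S : Finset Γ) (hS : SymmFin S) :
    ∃ F : Set X, MeasurableSet F ∧ F ⊆ Y \ Z ∧ ν F ≤ ν Y / 2 ∧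
      ν ((finBdry S F ∩ Y) \ Z) ≤ ENNReal.ofReal ε * ν F ∧
      ∀ F' : Set X, MeasurableSet F' → F' ⊆ Y \ Z → ν F' ≤ ν Y / 2 →
        ν ((finBdry S F' ∩ Y) \ Z) ≤ ENNReal.ofReal ε * ν F' →
        ν (F \ F') = 0 → ν (F' \ F) = 0 := by
  classical
  set Fam : Set X → Prop := fun F => MeasurableSet F ∧ F ⊆ Y \ Z ∧ ν F ≤ ν Y / 2 ∧
      ν ((finBdry S F ∩ Y) \ Z) ≤ ENNReal.ofReal ε * ν F with hFamDef
  have hfam_empty : Fam ∅ := by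
    refine ⟨MeasurableSet.empty, Set.empty_subset _, by simp, ?_⟩
    have h : finBdry S (∅ : Set X) = ∅ := by simp [finBdry, finSMul]
    simp [h]
  have hhalf_lt : ν Y / 2 < ⊤ := ENNReal.div_lt_top hYfin.ne (by norm_num)
  -- key selection step: given a Følner set `A`, pick a Følner set `G ⊇ₐₑ A` whose measure
  -- nearly attains the supremum over all Følner sets `⊇ₐₑ A`.
  have key : ∀ (n : ℕ) (A : Set X), Fam A →
      ∃ G : Set X, Fam G ∧ ν (A \ G) = 0 ∧
        ∀ F' : Set X, Fam F' → ν (A \ F') = 0 → ν F' ≤ ν G + (2⁻¹ : ENNReal) ^ n := by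
    intro n A hA
    set s : ENNReal := ⨆ (G : Set X) (_ : Fam G ∧ ν (A \ G) = 0), ν G with hs
    have hle : ∀ F' : Set X, Fam F' → ν (A \ F') = 0 → ν F' ≤ s := by
      intro F' h1 h2
      exact le_iSup₂ (f := fun (G : Set X) (_ : Fam G ∧ ν (A \ G) = 0) => ν G) F' ⟨h1, h2⟩
    have hstop : s ≤ ν Y / 2 := iSup₂_le fun G hG => hG.1.2.2.1
    have hsne : s ≠ ⊤ := (lt_of_le_of_lt hstop hhalf_lt).ne
    by_cases hcase : s ≤ (2⁻¹ : ENNReal) ^ n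
    · exact ⟨A, hA, by simp, fun F' h1 h2 =>
        le_trans (hle F' h1 h2) (le_trans hcase le_add_self)⟩
    · push_neg at hcase
      have h0 : s ≠ 0 := (lt_of_le_of_lt zero_le hcase).ne'
      have hpow : ((2⁻¹ : ENNReal) ^ n) ≠ 0 := pow_ne_zero n (by norm_num)
      have hlt : s - (2⁻¹ : ENNReal) ^ n < s := ENNReal.sub_lt_self hsne h0 hpow
      rw [hs] at hlt
      obtain ⟨G, hGlt⟩ := lt_iSup_iff.mp hlt
      obtain ⟨hG, hGlt⟩ := lt_iSup_iff.mp hGlt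
      refine ⟨G, hG.1, hG.2, fun F' h1 h2 => le_trans (hle F' h1 h2) ?_⟩
      exact tsub_le_iff_right.mp hGlt.le
  -- build the a.e.-increasing chain
  obtain ⟨f, -, hfstep⟩ := exists_seq_rel' (⟨∅, hfam_empty⟩ : {A : Set X // Fam A})
      (fun n p q => ν (p.1 \ q.1) = 0 ∧
        ∀ F' : Set X, Fam F' → ν (p.1 \ F') = 0 → ν F' ≤ ν q.1 + (2⁻¹ : ENNReal) ^ n)
      (fun n p => by
        obtain ⟨G, hG, h1, h2⟩ := key n p.1 p.2
        exact ⟨⟨G, hG⟩, h1, h2⟩)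
  set A_ : ℕ → Set X := fun n => (f n).1 with hA_
  have hFamA : ∀ n, Fam (A_ n) := fun n => (f n).2
  have hnull : ∀ n, ν (A_ n \ A_ (n + 1)) = 0 := fun n => (hfstep n).1
  have hbnd : ∀ n, ∀ F' : Set X, Fam F' → ν (A_ n \ F') = 0 →
      ν F' ≤ ν (A_ (n + 1)) + (2⁻¹ : ENNReal) ^ n := fun n => (hfstep n).2
  -- purify to a literal chain by removing a null set
  set M : Set X := ⋃ n, (A_ n \ A_ (n + 1)) with hMdef
  have hMnull : ν M = 0 := measure_iUnion_null hnull
  have hMm : MeasurableSet M :=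
    MeasurableSet.iUnion fun n => ((hFamA n).1).diff ((hFamA (n + 1)).1)
  set B_ : ℕ → Set X := fun n => A_ n \ M with hB_
  have hBmono : Monotone B_ := by
    refine monotone_nat_of_le_succ fun n x hx => ?_
    refine ⟨?_, hx.2⟩
    by_contra hxn
    exact hx.2 (Set.mem_iUnion.mpr ⟨n, hx.1, hxn⟩)
  have hBm : ∀ n, MeasurableSet (B_ n) := fun n => ((hFamA n).1).diff hMm
  have hνB : ∀ n, ν (B_ n) = ν (A_ n) := fun n => measure_diff_null hMnull
  -- the maximal Følner set
  refine ⟨⋃ n, B_ n, MeasurableSet.iUnion hBm, ?_, ?_, ?_, ?_⟩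
  · exact Set.iUnion_subset fun n => Set.diff_subset.trans (hFamA n).2.1
  · rw [hBmono.directed_le.measure_iUnion]
    exact iSup_le fun n => (hνB n).le.trans (hFamA n).2.2.1
  · -- boundary estimate for the union
    set F : Set X := ⋃ n, B_ n with hFdef
    set D : ℕ → Set X := fun k => ⋂ n, ((finBdry S (B_ (n + k)) ∩ Y) \ Z) with hDdef
    have hCn : ∀ n, ν ((finBdry S (B_ n) ∩ Y) \ Z) ≤ ENNReal.ofReal ε * ν (B_ n) := by
      intro n
      have hsub : (finBdry S (B_ n) ∩ Y) \ Z ⊆ ((finBdry S (A_ n) ∩ Y) \ Z) ∪ M := by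
        intro x hx
        rcases hx with ⟨⟨⟨hxS, hxB⟩, hxY⟩, hxZ⟩
        by_cases hxM : x ∈ M
        · exact Or.inr hxM
        · refine Or.inl ⟨⟨⟨finSMul_mono' S Set.diff_subset hxS, fun hxA => hxB ⟨hxA, hxM⟩⟩,
            hxY⟩, hxZ⟩
      calc ν ((finBdry S (B_ n) ∩ Y) \ Z)
          ≤ ν (((finBdry S (A_ n) ∩ Y) \ Z) ∪ M) := measure_mono hsub
        _ ≤ ν ((finBdry S (A_ n) ∩ Y) \ Z) + ν M := measure_union_le _ _
        _ = ν ((finBdry S (A_ n) ∩ Y) \ Z) := by rw [hMnull, add_zero]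
        _ ≤ ENNReal.ofReal ε * ν (A_ n) := (hFamA n).2.2.2
        _ = ENNReal.ofReal ε * ν (B_ n) := by rw [hνB]
    have hsubD : (finBdry S F ∩ Y) \ Z ⊆ ⋃ k, D k := by
      intro x hx
      rcases hx with ⟨⟨⟨hxS, hxF⟩, hxY⟩, hxZ⟩
      rw [hFdef, finSMul_iUnion'] at hxS
      obtain ⟨k, hxk⟩ := Set.mem_iUnion.mp hxS
      refine Set.mem_iUnion.mpr ⟨k, Set.mem_iInter.mpr fun n => ?_⟩
      refine ⟨⟨⟨finSMul_mono' S (hBmono (Nat.le_add_left k n)) hxk, fun hxB => ?_⟩, hxY⟩, hxZ⟩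
      exact hxF (Set.mem_iUnion.mpr ⟨n + k, hxB⟩)
    have hDmono : Monotone D := by
      refine monotone_nat_of_le_succ fun k x hx => Set.mem_iInter.mpr fun n => ?_
      have := Set.mem_iInter.mp hx (n + 1)
      rwa [show n + 1 + k = n + (k + 1) by ring] at this
    calc ν ((finBdry S F ∩ Y) \ Z) ≤ ν (⋃ k, D k) := measure_mono hsubD
      _ = ⨆ k, ν (D k) := hDmono.directed_le.measure_iUnion
      _ ≤ ENNReal.ofReal ε * ν F := by
          refine iSup_le fun k => ?_
          have h1 : ν (D k) ≤ ν ((finBdry S (B_ k) ∩ Y) \ Z) := by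
            refine measure_mono ?_
            intro x hx
            have := Set.mem_iInter.mp hx 0
            rwa [zero_add] at this
          refine h1.trans ((hCn k).trans ?_)
          exact mul_le_mul_right (measure_mono (Set.subset_iUnion B_ k)) _
  · -- maximality
    intro F' hF'm hF'sub hF'half hF'bdry hdiff
    set F : Set X := ⋃ n, B_ n with hFdef
    have hFamF' : Fam F' := ⟨hF'm, hF'sub, hF'half, hF'bdry⟩
    have hFfin : ν F < ⊤ := by
      refine lt_of_le_of_lt ?_ hhalf_lt
      rw [hBmono.directed_le.measure_iUnion]
      exact iSup_le fun n => (hνB n).le.trans (hFamA n).2.2.1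
    have hAn : ∀ n, ν (A_ n \ F') = 0 := by
      intro n
      have hsub : A_ n \ F' ⊆ M ∪ (F \ F') := by
        intro x hx
        by_cases hxM : x ∈ M
        · exact Or.inl hxM
        · exact Or.inr ⟨Set.mem_iUnion.mpr ⟨n, hx.1, hxM⟩, hx.2⟩
      refine le_antisymm ?_ zero_le
      calc ν (A_ n \ F') ≤ ν (M ∪ (F \ F')) := measure_mono hsub
        _ ≤ ν M + ν (F \ F') := measure_union_le _ _
        _ = 0 := by rw [hMnull, hdiff, add_zero]
    have hF'le : ν F' ≤ ν F := by
      refine ENNReal.le_of_forall_pos_le_add fun δ hδ _ => ?_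
      obtain ⟨n, hn⟩ := ENNReal.exists_inv_two_pow_lt
        (show (δ : ENNReal) ≠ 0 by exact_mod_cast hδ.ne')
      calc ν F' ≤ ν (A_ (n + 1)) + (2⁻¹ : ENNReal) ^ n := hbnd n F' hFamF' (hAn n)
        _ ≤ ν F + (δ : ENNReal) := by
            refine add_le_add ?_ hn.le
            rw [← hνB (n + 1)]
            exact measure_mono (Set.subset_iUnion B_ (n + 1))
    have hFm : MeasurableSet F := MeasurableSet.iUnion hBm
    have e1 : ν (F' \ F) + ν (F' ∩ F) = ν F' := measure_diff_add_inter F' hFm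
    have e2 : ν (F \ F') + ν (F ∩ F') = ν F := measure_diff_add_inter F hF'm
    have e3 : ν (F' ∩ F) = ν F := by
      rw [Set.inter_comm]
      rw [hdiff, zero_add] at e2
      exact e2
    have : ν (F' \ F) + ν F ≤ 0 + ν F := by
      rw [zero_add, ← e3, e1]
      exact hF'le.trans e3.ge
    have h := (ENNReal.add_le_add_iff_right hFfin.ne).mp this
    exact le_antisymm h zero_le
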